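/- Let N ≥ 2, Δ(s) = √(1 − 4(1 − 1/N) s (1 − s)), and let A(s) be the real symmetric 2×2 matrix with entries A₁₁ = 1 − s − (1−s)/N, A₂₂ = 1 − (1−s)(N−1)/N, A₁₂ = A₂₁ = −(1−s)√(N−1)/N. Let φ : [0,1] → ℝ² be any continuously differentiable family of unit vectors with A(s) φ(s) = ((1 − Δ(s))/2) φ(s) for all s (a ground-state eigenvector path). Then the speed of the eigenpath satisfies ‖φ'(s)‖ = (√(N−1)/N) / Δ(s)² for every s ∈ [0,1]. -/

import Mathlib

theorem key_alg (n k D s X Y X1 Y1 l : ℝ) (hn : n ≠ 0) (hD : D ≠ 0)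
    (R1 : (1-s-(1-s)/n)*X + (-(1-s)*k/n)*Y = (1-D)/2*X)
    (R2 : (-(1-s)*k/n)*X + (1-(1-s)*(n-1)/n)*Y = (1-D)/2*Y)
    (R3 : X^2+Y^2 = 1)
    (R4 : X*X1 + Y*Y1 = 0)
    (hD1 : (0-1-(0-1)/n)*X + (1-s-(1-s)/n)*X1 + (-(0-1)*k/n)*Y + (-(1-s)*k/n)*Y1 = l*X + (1-D)/2*X1)
    (hD2 : (-(0-1)*k/n)*X + (-(1-s)*k/n)*X1 + (-(0-1)*(n-1)/n)*Y + (1-(1-s)*(n-1)/n)*Y1 = l*Y + (1-D)/2*Y1) :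
    X1^2 + Y1^2 = ((k/n)/D^2)^2 := by
  field_simp at R1 R2 hD1 hD2 ⊢
  have key : n^2 * ((X1^2 + Y1^2) * (n*D^2)^2) = n^2 * k^2 := by
    linear_combination
      ((n^2*D^2*(X*Y1-Y*X1) - n*k) * (n*D*Y1/2 - k*X - (n-1)*Y)) * R1 +
      ((n^2*D^2*(X*Y1-Y*X1) - n*k) * (-(n*D*X1/2) + k*Y - (n-1)*X)) * R2 +
      ((n^2*D^2*(X*Y1-Y*X1) - n*k) * (-(n*k)) - n^4*D^4*(X1^2+Y1^2)) * R3 +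
      (n^4*D^4*(X*X1+Y*Y1)) * R4 +
      ((n^2*D^2*(X*Y1-Y*X1) - n*k) * (-(n*D*Y/2))) * hD1 +
      ((n^2*D^2*(X*Y1-Y*X1) - n*k) * (n*D*X/2)) * hD2
  have h2 := mul_left_cancel₀ (pow_ne_zero 2 hn) key
  linarith [h2]

/-- For `N ≥ 2`, let `A(s)` be the `2×2` matrix of the Grover
interpolation Hamiltonian on its invariant subspace and
`Δ(s) = √(1 − 4(1 − 1/N)s(1 − s))`. If `φ : [0,1] → ℝ²` is a continuously
differentiable family of unit vectors with `A(s) φ(s) = ((1 − Δ(s))/2) φ(s)` for all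
`s ∈ [0,1]` (a ground-state eigenvector path), then the speed of the eigenpath is
`‖φ'(s)‖ = (√(N−1)/N) / Δ(s)²` for every `s ∈ [0,1]`. -/
theorem grover_eigenpath_speed
    (N : ℕ) (hN : 2 ≤ N)
    (Δ : ℝ → ℝ)
    (hΔ : ∀ s, Δ s = Real.sqrt (1 - 4 * (1 - 1 / (N : ℝ)) * s * (1 - s)))
    (A : ℝ → Matrix (Fin 2) (Fin 2) ℝ)
    (hA : ∀ s, A s =
      !![1 - s - (1 - s) / (N : ℝ), -(1 - s) * Real.sqrt ((N : ℝ) - 1) / (N : ℝ);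
         -(1 - s) * Real.sqrt ((N : ℝ) - 1) / (N : ℝ), 1 - (1 - s) * ((N : ℝ) - 1) / (N : ℝ)])
    (φ : ℝ → EuclideanSpace ℝ (Fin 2)) (hφ : ContDiff ℝ 1 φ)
    (hunit : ∀ s ∈ Set.Icc (0 : ℝ) 1, ‖φ s‖ = 1)
    (heig : ∀ s ∈ Set.Icc (0 : ℝ) 1,
      (A s).mulVec (fun j => φ s j) = fun i => ((1 - Δ s) / 2) * φ s i) :
    ∀ s ∈ Set.Icc (0 : ℝ) 1,
      ‖deriv φ s‖ = (Real.sqrt ((N : ℝ) - 1) / (N : ℝ)) / (Δ s) ^ 2 := by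
  have hn2 : (2:ℝ) ≤ (N:ℝ) := by exact_mod_cast hN
  set n : ℝ := (N:ℝ) with hndef
  have hnpos : (0:ℝ) < n := by linarith
  have hn0 : n ≠ 0 := ne_of_gt hnpos
  set k : ℝ := Real.sqrt (n - 1) with hkdef
  have hk0 : 0 ≤ k := Real.sqrt_nonneg _
  have hargpos : ∀ t : ℝ, 0 < 1 - 4 * (1 - 1/n) * t * (1 - t) := by
    intro t
    have h1 : 0 < 1/n := by positivity
    have h2 : 1/n ≤ 1/2 := by
      rw [div_le_div_iff₀ hnpos (by norm_num)]; linarith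
    nlinarith [sq_nonneg (2*t - 1)]
  have hΔpos : ∀ t, 0 < Δ t := by
    intro t; rw [hΔ]; exact Real.sqrt_pos.mpr (hargpos t)
  have hΔsq : ∀ t, (Δ t)^2 = 1 - 4 * (1 - 1/n) * t * (1 - t) := by
    intro t; rw [hΔ]; exact Real.sq_sqrt (hargpos t).le
  have hΔfun : Δ = fun t => Real.sqrt (1 - 4 * (1 - 1/n) * t * (1 - t)) := funext hΔ
  have hφdiff : Differentiable ℝ φ := hφ.differentiable one_ne_zero
  -- component derivative helpers
  have hcomp : ∀ (i : Fin 2) (t : ℝ), HasDerivAt (fun u => φ u i) (deriv φ t i) t := by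
    intro i t
    have h := (EuclideanSpace.proj (𝕜 := ℝ) i).hasFDerivAt.comp_hasDerivAt t (hφdiff t).hasDerivAt
    exact h
  -- squared norm on Icc
  have hsq : ∀ t ∈ Set.Icc (0:ℝ) 1, (φ t 0)^2 + (φ t 1)^2 = 1 := by
    intro t ht
    have h := hunit t ht
    rw [EuclideanSpace.norm_eq, Real.sqrt_eq_one] at h
    simpa [Fin.sum_univ_two, Real.norm_eq_abs, sq_abs] using h
  -- eigen equations componentwise on Icc
  have hE1 : ∀ t ∈ Set.Icc (0:ℝ) 1,
      (1 - t - (1-t)/n) * φ t 0 + (-(1-t)*k/n) * φ t 1 = (1 - Δ t)/2 * φ t 0 := by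
    intro t ht
    have h := congrFun (heig t ht) 0
    simp [hA, Matrix.mulVec, dotProduct, Fin.sum_univ_two] at h
    linear_combination h
  have hE2 : ∀ t ∈ Set.Icc (0:ℝ) 1,
      (-(1-t)*k/n) * φ t 0 + (1 - (1-t)*(n-1)/n) * φ t 1 = (1 - Δ t)/2 * φ t 1 := by
    intro t ht
    have h := congrFun (heig t ht) 1
    simp [hA, Matrix.mulVec, dotProduct, Fin.sum_univ_two] at h
    linear_combination h
  have key : ∀ s ∈ Set.Ioo (0:ℝ) 1, ‖deriv φ s‖ = (k/n) / (Δ s)^2 := by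
    intro s hs
    have hmem : Set.Icc (0:ℝ) 1 ∈ nhds s := Icc_mem_nhds hs.1 hs.2
    have hX := hcomp 0 s
    have hY := hcomp 1 s
    -- derivative of Δ
    have hΔdiff : DifferentiableAt ℝ Δ s := by
      rw [hΔfun]
      exact DifferentiableAt.sqrt (by fun_prop) (ne_of_gt (hargpos s))
    obtain ⟨dΔ, hΔd⟩ : ∃ d, HasDerivAt Δ d s := ⟨_, hΔdiff.hasDerivAt⟩
    -- polynomial coefficient derivatives
    have h1t : HasDerivAt (fun t : ℝ => 1 - t) (-1) s := by
      simpa using (hasDerivAt_id s).const_sub 1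
    have ha11 : HasDerivAt (fun t : ℝ => 1 - t - (1-t)/n) (-1 - (-1)/n) s :=
      h1t.sub (h1t.div_const n)
    have ha12 : HasDerivAt (fun t : ℝ => -(1-t)*k/n) (-(-1)*k/n) s :=
      (h1t.neg.mul_const k).div_const n
    have ha22 : HasDerivAt (fun t : ℝ => 1 - (1-t)*(n-1)/n) (-(-1*(n-1)/n)) s :=
      ((h1t.mul_const (n-1)).div_const n).const_sub 1
    have hlam : HasDerivAt (fun t : ℝ => (1 - Δ t)/2) ((0 - dΔ)/2) s :=
      ((hasDerivAt_const s (1:ℝ)).sub hΔd).div_const 2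
    -- derivative of unit-norm constraint
    have hnormD : HasDerivAt (fun t => (φ t 0)^2 + (φ t 1)^2)
        ((2 * φ s 0 ^ 1 * deriv φ s 0) + (2 * φ s 1 ^ 1 * deriv φ s 1)) s := by
      exact ((hcomp 0 s).pow 2).add ((hcomp 1 s).pow 2)
    have hnorm0 : HasDerivAt (fun t => (φ t 0)^2 + (φ t 1)^2) 0 s :=
      (hasDerivAt_const s (1:ℝ)).congr_of_eventuallyEq
        (Filter.eventuallyEq_of_mem hmem (fun t ht => hsq t ht))
    have hR4 : φ s 0 * deriv φ s 0 + φ s 1 * deriv φ s 1 = 0 := by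
      have := hnormD.unique hnorm0
      nlinarith [this]
    -- derivative of eigen equation, first component
    have hL1 : HasDerivAt (fun t => (1 - t - (1-t)/n) * φ t 0 + (-(1-t)*k/n) * φ t 1)
        (((-1 - (-1)/n) * φ s 0 + (1 - s - (1-s)/n) * deriv φ s 0) +
         ((-(-1)*k/n) * φ s 1 + (-(1-s)*k/n) * deriv φ s 1)) s :=
      (ha11.mul hX).add (ha12.mul hY)
    have hRh1 : HasDerivAt (fun t => (1 - Δ t)/2 * φ t 0)
        ((0 - dΔ)/2 * φ s 0 + (1 - Δ s)/2 * deriv φ s 0) s := hlam.mul hX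
    have hD1 := hL1.unique <| hRh1.congr_of_eventuallyEq
      (Filter.eventuallyEq_of_mem hmem (fun t ht => hE1 t ht))
    -- second component
    have hL2 : HasDerivAt (fun t => (-(1-t)*k/n) * φ t 0 + (1 - (1-t)*(n-1)/n) * φ t 1)
        (((-(-1)*k/n) * φ s 0 + (-(1-s)*k/n) * deriv φ s 0) +
         ((-(-1*(n-1)/n)) * φ s 1 + (1 - (1-s)*(n-1)/n) * deriv φ s 1)) s :=
      (ha12.mul hX).add (ha22.mul hY)
    have hRh2 : HasDerivAt (fun t => (1 - Δ t)/2 * φ t 1)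
        ((0 - dΔ)/2 * φ s 1 + (1 - Δ s)/2 * deriv φ s 1) s := hlam.mul hY
    have hD2 := hL2.unique <| hRh2.congr_of_eventuallyEq
      (Filter.eventuallyEq_of_mem hmem (fun t ht => hE2 t ht))
    have hsIcc : s ∈ Set.Icc (0:ℝ) 1 := ⟨hs.1.le, hs.2.le⟩
    have halg : (deriv φ s 0)^2 + (deriv φ s 1)^2 = ((k/n)/(Δ s)^2)^2 := by
      apply key_alg n k (Δ s) s (φ s 0) (φ s 1) (deriv φ s 0) (deriv φ s 1) ((0 - dΔ)/2)
        hn0 (ne_of_gt (hΔpos s)) (hE1 s hsIcc) (hE2 s hsIcc) (hsq s hsIcc) hR4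
      · linear_combination hD1
      · linear_combination hD2
    rw [EuclideanSpace.norm_eq]
    have : ∑ i : Fin 2, ‖deriv φ s i‖^2 = ((k/n)/(Δ s)^2)^2 := by
      rw [Fin.sum_univ_two]
      simpa [Real.norm_eq_abs, sq_abs] using halg
    rw [this, Real.sqrt_sq (by positivity)]
  -- extend to the closed interval by continuity
  intro s hs
  have hcont1 : Continuous fun t => ‖deriv φ t‖ := (hφ.continuous_deriv le_rfl).norm
  have hΔcont : Continuous Δ := by
    rw [hΔfun]; exact Real.continuous_sqrt.comp (by fun_prop)
  have hcont2 : Continuous fun t => (k/n) / (Δ t)^2 :=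
    continuous_const.div (hΔcont.pow 2) (fun t => ne_of_gt (pow_pos (hΔpos t) 2))
  have hEq : Set.EqOn (fun t => ‖deriv φ t‖) (fun t => (k/n) / (Δ t)^2)
      (closure (Set.Ioo (0:ℝ) 1)) :=
    Set.EqOn.closure (fun t ht => key t ht) hcont1 hcont2
  rw [closure_Ioo (by norm_num : (0:ℝ) ≠ 1)] at hEq
  have := hEq hs
  simpa using this
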